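/- Let r ∈ ℂ and define the shadow operator ξ_r by (ξ_r F)(z) = 2i y^{r̄} · conj(∂F/∂z̄ (z)) for F ∈ C²(U), U ⊂ ℍ open, y = Im z. Then F is r-harmonic on U (i.e. Δ_r F = 0 where Δ_r = -4y² ∂²/∂z∂z̄ + 2ir y ∂/∂z̄) if and only if ξ_r F is holomorphic on U. -/

import Mathlib

/-- Wirtinger derivative `∂/∂z̄ = (1/2)(∂/∂x + i ∂/∂y)` of `F : ℂ → ℂ` (as an
ℝ-differentiable map). -/
noncomputable def wderivBar (F : ℂ → ℂ) (z : ℂ) : ℂ :=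
  (fderiv ℝ F z 1 + Complex.I * fderiv ℝ F z Complex.I) / 2

/-- Wirtinger derivative `∂/∂z = (1/2)(∂/∂x - i ∂/∂y)`. -/
noncomputable def wderiv (F : ℂ → ℂ) (z : ℂ) : ℂ :=
  (fderiv ℝ F z 1 - Complex.I * fderiv ℝ F z Complex.I) / 2

/-- The operator `Δ_r = -4y² ∂²/∂z∂z̄ + 2iry ∂/∂z̄`. -/
noncomputable def hlaplacian (r : ℂ) (F : ℂ → ℂ) (z : ℂ) : ℂ :=
  -4 * (z.im : ℂ) ^ 2 * wderiv (fun w => wderivBar F w) z +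
    2 * Complex.I * r * (z.im : ℂ) * wderivBar F z

/-- The shadow operator `(ξ_r F)(z) = 2i y^r̄ conj(∂F/∂z̄ (z))`. -/
noncomputable def shadowOp (r : ℂ) (F : ℂ → ℂ) (z : ℂ) : ℂ :=
  2 * Complex.I * ((z.im : ℂ) ^ (starRingEnd ℂ r)) * (starRingEnd ℂ) (wderivBar F z)

/-- Cauchy–Riemann: an ℝ-differentiable map is ℂ-differentiable iff `∂f/∂z̄ = 0`. -/
lemma cr_aux {f : ℂ → ℂ} {z : ℂ} (hf : DifferentiableAt ℝ f z) :
    DifferentiableAt ℂ f z ↔ wderivBar f z = 0 := by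
  rw [differentiableAt_iff_restrictScalars ℝ hf]
  constructor
  · rintro ⟨g', hg'⟩
    simp only [wderivBar, ← hg', ContinuousLinearMap.coe_restrictScalars']
    have : g' Complex.I = Complex.I * g' 1 := by
      rw [show g' Complex.I = g' (Complex.I • 1) by norm_num, map_smul, smul_eq_mul]
    rw [this]; ring_nf; simp [Complex.I_sq]
  · intro h
    refine ⟨(fderiv ℝ f z 1) • (1 : ℂ →L[ℂ] ℂ), ?_⟩
    have hI : fderiv ℝ f z Complex.I = Complex.I * fderiv ℝ f z 1 := by
      have h2 : fderiv ℝ f z 1 + Complex.I * fderiv ℝ f z Complex.I = 0 := by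
        simp only [wderivBar] at h; simpa using h
      have := congrArg (fun w => -Complex.I * w) h2
      simp only [mul_add, mul_zero] at this
      rw [← mul_assoc] at this
      simp [Complex.I_mul_I] at this
      linear_combination this
    ext v
    have hv : v = (v.re : ℝ) • (1 : ℂ) + (v.im : ℝ) • Complex.I := by
      simp [Complex.real_smul, Complex.re_add_im]
    rw [ContinuousLinearMap.coe_restrictScalars']
    calc ((fderiv ℝ f z 1) • (1 : ℂ →L[ℂ] ℂ)) v = fderiv ℝ f z 1 * v := by
          simp [smul_eq_mul]
      _ = fderiv ℝ f z v := by
          conv_rhs => rw [hv]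
          rw [map_add, map_smul, map_smul, hI]
          simp [Complex.real_smul]
          have hv' : v = (v.re : ℂ) + v.im * Complex.I := (Complex.re_add_im v).symm
          conv_lhs => rw [hv']
          ring

/-- If `F` is `C²` on an open set, then `∂F/∂z̄` is ℝ-differentiable there. -/
lemma wbar_diffOn {F : ℂ → ℂ} {U : Set ℂ} (hU : IsOpen U) (hF : ContDiffOn ℝ 2 F U) :
    DifferentiableOn ℝ (wderivBar F) U := by
  have h1 : ContDiffOn ℝ 1 (fderiv ℝ F) U := hF.fderiv_of_isOpen hU (by norm_num)
  have h2 : ContDiffOn ℝ 1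
      (fun w => ((fderiv ℝ F w) 1 + Complex.I * (fderiv ℝ F w) Complex.I) / 2) U :=
    ((h1.clm_apply contDiffOn_const).add
      (contDiffOn_const.mul (h1.clm_apply contDiffOn_const))).div_const 2
  exact fun z hz => ((h2 z hz).differentiableWithinAt (by norm_num) : _)

/-- Key identity: `∂/∂z̄ (ξ_r F) = -(i/2) y^{r̄-2} conj (Δ_r F)`, together with
ℝ-differentiability of the shadow. -/
lemma shadow_deriv (r : ℂ) {F : ℂ → ℂ} {z : ℂ} (hz : 0 < z.im)
    (hg : DifferentiableAt ℝ (wderivBar F) z) :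
    DifferentiableAt ℝ (shadowOp r F) z ∧
    wderivBar (shadowOp r F) z =
      -(Complex.I / 2) * (z.im : ℂ) ^ (starRingEnd ℂ r - 2) *
        (starRingEnd ℂ) (hlaplacian r F z) := by
  set cc := starRingEnd ℂ r with hcc
  set M : ℂ →L[ℝ] ℂ := Complex.ofRealCLM.comp Complex.imCLM with hMdef
  have hM : HasFDerivAt (fun w : ℂ => ((w.im : ℝ) : ℂ)) M z := M.hasFDerivAt
  have h0 : ((z.im : ℝ) : ℂ) ∈ Complex.slitPlane := by
    rw [Complex.mem_slitPlane_iff]; left; simpa using hz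
  have hpow : HasFDerivAt (fun w : ℂ => ((w.im : ℝ) : ℂ) ^ cc)
      ((cc * ((z.im : ℝ) : ℂ) ^ (cc - 1)) • M) z :=
    by
      have h := ((Complex.hasStrictDerivAt_cpow_const (c := cc) h0).hasDerivAt).comp_hasFDerivAt z hM
      exact h
  set CC : ℂ →L[ℝ] ℂ := Complex.conjCLE.toContinuousLinearMap with hCCdef
  set Dg := fderiv ℝ (wderivBar F) z with hDg
  have hconj : HasFDerivAt (fun w => (starRingEnd ℂ) (wderivBar F w)) (CC.comp Dg) z := by
    have h1 := CC.hasFDerivAt.comp z hg.hasFDerivAt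
    have heq : (fun w => (starRingEnd ℂ) (wderivBar F w)) = CC ∘ (wderivBar F) := by
      funext w; simp [hCCdef, Complex.conjCLE_apply]
    rw [heq]; exact h1
  have hmul := (hpow.const_mul (2 * Complex.I)).mul hconj
  have hsh : HasFDerivAt (shadowOp r F)
      ((2 * Complex.I * ((z.im : ℂ) ^ cc)) • (CC.comp Dg) +
        ((starRingEnd ℂ) (wderivBar F z)) •
          ((2 * Complex.I) • ((cc * ((z.im : ℝ) : ℂ) ^ (cc - 1)) • M))) z := by
    exact hmul
  refine ⟨hsh.differentiableAt, ?_⟩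
  have hL := hsh.fderiv
  have hy : ((z.im : ℝ) : ℂ) ≠ 0 := by
    simpa using (ne_of_gt hz)
  have e1 : ((z.im : ℝ) : ℂ) ^ (cc - 1) = ((z.im : ℝ) : ℂ) ^ cc / ((z.im : ℝ) : ℂ) := by
    rw [Complex.cpow_sub _ _ hy, Complex.cpow_one]
  have e2 : ((z.im : ℝ) : ℂ) ^ (cc - 2) = ((z.im : ℝ) : ℂ) ^ cc / ((z.im : ℝ) : ℂ) ^ 2 := by
    rw [Complex.cpow_sub _ _ hy, show (2 : ℂ) = ((2 : ℕ) : ℂ) by norm_num,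
      Complex.cpow_natCast]
  rw [show wderivBar (shadowOp r F) z =
      (fderiv ℝ (shadowOp r F) z 1 + Complex.I * fderiv ℝ (shadowOp r F) z Complex.I) / 2
      from rfl, hL]
  simp only [ContinuousLinearMap.add_apply, ContinuousLinearMap.coe_smul',
    ContinuousLinearMap.coe_comp', Pi.smul_apply, Function.comp_apply, smul_eq_mul,
    hCCdef, hMdef, ContinuousLinearEquiv.coe_coe, Complex.conjCLE_apply,
    Complex.ofRealCLM_apply, Complex.imCLM_apply, Complex.one_im, Complex.I_im,
    Complex.ofReal_zero, Complex.ofReal_one, mul_zero, mul_one, add_zero, zero_add,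
    hlaplacian, wderiv, map_add, map_mul, map_sub, map_neg, map_div₀, map_ofNat,
    Complex.conj_ofReal, Complex.conj_I, ← hDg]
  rw [e1, e2]
  have hG : (starRingEnd ℂ) (wderivBar F z) =
      ((starRingEnd ℂ) (fderiv ℝ F z 1) -
        Complex.I * (starRingEnd ℂ) (fderiv ℝ F z Complex.I)) / 2 := by
    simp [wderivBar, map_add, map_mul, map_div₀, map_ofNat, Complex.conj_I]; ring
  rw [hG]
  simp only [map_pow, Complex.conj_ofReal, ← hcc]
  field_simp
  ring

/-- a `C²` function `F` on an open `U ⊆ ℍ` is `r`-harmonic (`Δ_r F = 0`)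
iff its shadow `ξ_r F` is holomorphic on `U`. -/
theorem r_harmonic_iff_shadow_holomorphic (r : ℂ) (U : Set ℂ) (hU : IsOpen U)
    (hUH : U ⊆ {z : ℂ | 0 < z.im}) (F : ℂ → ℂ) (hF : ContDiffOn ℝ 2 F U) :
    (∀ z ∈ U, hlaplacian r F z = 0) ↔ DifferentiableOn ℂ (shadowOp r F) U := by
  have hgU : DifferentiableOn ℝ (wderivBar F) U := wbar_diffOn hU hF
  constructor
  · intro hΔ z hz
    have hgz : DifferentiableAt ℝ (wderivBar F) z :=
      (hgU z hz).differentiableAt (hU.mem_nhds hz)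
    obtain ⟨hd, he⟩ := shadow_deriv r (hUH hz) hgz
    have h0 : wderivBar (shadowOp r F) z = 0 := by
      rw [he, hΔ z hz]; simp
    exact ((cr_aux hd).2 h0).differentiableWithinAt
  · intro hξ z hz
    have hgz : DifferentiableAt ℝ (wderivBar F) z :=
      (hgU z hz).differentiableAt (hU.mem_nhds hz)
    obtain ⟨hd, he⟩ := shadow_deriv r (hUH hz) hgz
    have h0 : wderivBar (shadowOp r F) z = 0 :=
      (cr_aux hd).1 ((hξ z hz).differentiableAt (hU.mem_nhds hz))
    rw [he] at h0
    have hzy : (0 : ℝ) < z.im := hUH hz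
    have hy : ((z.im : ℝ) : ℂ) ≠ 0 := by simpa using ne_of_gt hzy
    have hc1 : -(Complex.I / 2) ≠ 0 := by simp [Complex.I_ne_zero]
    have hc2 : ((z.im : ℝ) : ℂ) ^ (starRingEnd ℂ r - 2) ≠ 0 := by
      simp [Complex.cpow_eq_zero_iff, hy]
    have : (starRingEnd ℂ) (hlaplacian r F z) = 0 := by
      rcases mul_eq_zero.1 h0 with h | h
      · exact absurd h (mul_ne_zero hc1 hc2)
      · exact h
    simpa using congrArg (starRingEnd ℂ) this
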